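/- (No effective domain-length function) Let A ⊆ ℕ be an infinite computably enumerable set and let θ be a quasi-Gödel numbering of S_A. Then there is no total computable p : ℕ → ℕ such that for every i with θ i an initial-segment function for A, the domain of θ i equals {m | m < p i}, i.e. p i is the length of the initial segment on which θ i is defined. -/

import Mathlib

/-- `r : ℕ →. ℕ` is an initial-segment function for `A`: its domain is empty or
equals `{m | m < a}` for some `a ∈ A`. -/
def IsInitSeg (A : Set ℕ) (r : ℕ →. ℕ) : Prop :=
  {x : ℕ | (r x).Dom} = (∅ : Set ℕ) ∨ ∃ a ∈ A, {x : ℕ | (r x).Dom} = {m : ℕ | m < a}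

/-- `SA A` is the class of unary partial functions that are either total computable
or initial-segment functions for `A`. -/
def SA (A : Set ℕ) : Set (ℕ →. ℕ) :=
  {r | (∃ f : ℕ → ℕ, Computable f ∧ ∀ x, r x = Part.some (f x)) ∨ IsInitSeg A r}

/-- The extended graph of a unary partial function. -/
def graphE (q : ℕ →. ℕ) : Set ℕ :=
  {n | ∃ y, n = Nat.pair y 0} ∪ {n | ∃ x z, q x = Part.some z ∧ n = Nat.pair x (z + 1)}

/-- The graph of a unary partial function. -/
def pgraph (q : ℕ →. ℕ) : Set ℕ :=
  {n | ∃ x z, q x = Part.some z ∧ n = Nat.pair x z}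

/-- Condition (QGN I): the extended graph of the universal function of `θ` is
enumerated by a total computable function. -/
def QGN1 (θ : ℕ → ℕ →. ℕ) : Prop :=
  ∃ h : ℕ → ℕ, Computable h ∧
    Set.range h = {n | ∃ w, n = Nat.pair w 0} ∪
      {n | ∃ i x z, θ i x = Part.some z ∧ n = Nat.pair (Nat.pair i x) (z + 1)}

/-- Condition (QGN II). -/
def QGN2 (A : Set ℕ) (θ : ℕ → ℕ →. ℕ) : Prop :=
  ∀ k : ℕ → ℕ → ℕ, Computable₂ k →
    ∃ v : ℕ → ℕ, Computable v ∧
      ∀ i, ∀ r ∈ SA A, Set.range (k i) = graphE r → θ (v i) = r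

/-- A quasi-Gödel numbering of `SA A`. -/
def QuasiGodel (A : Set ℕ) (θ : ℕ → ℕ →. ℕ) : Prop :=
  Set.range θ = SA A ∧ QGN1 θ ∧ QGN2 A θ

/-- A set of naturals is computably enumerable. -/
def CEset (C : Set ℕ) : Prop :=
  C = ∅ ∨ ∃ g : ℕ → ℕ, Computable g ∧ C = Set.range g

/-- The standard Gödel numbering of the unary partial recursive functions. -/
def phi (i : ℕ) : ℕ →. ℕ :=
  Nat.Partrec.Code.eval (Denumerable.ofNat Nat.Partrec.Code i)


open Nat.Partrec (Code)
open Nat.Partrec.Code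

/-- stage-`s` halting check for `phi c 0`. -/
def stg (c s : ℕ) : Bool := (evaln s (Denumerable.ofNat Code c) 0).isSome

def belowAll (g : ℕ → ℕ) (t u : ℕ) : Bool :=
  Nat.rec (motive := fun _ => Bool) true (fun w ih => ih && decide (g w < t)) u

def condA (c m : ℕ) : Bool := !stg c m.unpair.2 && decide (m.unpair.1 < m.unpair.2)

def condB (g : ℕ → ℕ) (c m : ℕ) : Bool :=
  stg c m.unpair.2.unpair.1 && !stg c (m.unpair.2.unpair.1 - 1) &&
  decide (m.unpair.2.unpair.1 ≤ g m.unpair.2.unpair.2) &&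
  belowAll g m.unpair.2.unpair.1 m.unpair.2.unpair.2 &&
  decide (m.unpair.1 < g m.unpair.2.unpair.2)

def kk (g : ℕ → ℕ) (c n : ℕ) : ℕ :=
  bif n % 2 == 0 then Nat.pair (n / 2) 0
  else bif condA c (n / 2) || condB g c (n / 2) then Nat.pair (n / 2).unpair.1 1
  else Nat.pair 0 0

-- Bool combinators for Computable
theorem Computable.band' {α} [Primcodable α] {f g : α → Bool} (hf : Computable f)
    (hg : Computable g) : Computable fun a => f a && g a :=
  (Computable.cond hf hg (Computable.const false)).of_eq fun a => by cases h : f a <;> simp [h]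

theorem Computable.bor' {α} [Primcodable α] {f g : α → Bool} (hf : Computable f)
    (hg : Computable g) : Computable fun a => f a || g a :=
  (Computable.cond hf (Computable.const true) hg).of_eq fun a => by cases h : f a <;> simp [h]

theorem stg_primrec : Primrec₂ stg :=
  (Primrec.option_isSome.comp <| primrec_evaln.comp <|
    (Primrec.snd.pair ((Primrec.ofNat Code).comp Primrec.fst)).pair (Primrec.const 0)).to₂

theorem belowAll_computable {g : ℕ → ℕ} (hg : Computable g) : Computable₂ (belowAll g) := by
  have hh : Computable₂ fun (p : ℕ × ℕ) (q : ℕ × Bool) => q.2 && decide (g q.1 < p.1) :=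
    (Computable.band' (Computable.snd.comp Computable.snd)
      ((Primrec₂.to_comp Primrec.nat_lt.decide).comp (hg.comp (Computable.fst.comp Computable.snd))
        (Computable.fst.comp Computable.fst))).to₂
  exact (Computable.nat_rec Computable.snd (Computable.const true) hh).to₂

theorem condA_computable : Computable₂ condA := by
  have h1 : Computable fun p : ℕ × ℕ => !stg p.1 p.2.unpair.2 :=
    (Primrec.not.comp (stg_primrec.comp Primrec.fst
      (Primrec.snd.comp (Primrec.unpair.comp Primrec.snd)))).to_comp
  have h2 : Computable fun p : ℕ × ℕ => decide (p.2.unpair.1 < p.2.unpair.2) :=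
    (Primrec.nat_lt.decide.comp (Primrec.fst.comp (Primrec.unpair.comp Primrec.snd))
      (Primrec.snd.comp (Primrec.unpair.comp Primrec.snd))).to_comp
  exact (Computable.band' h1 h2).to₂

theorem condB_computable {g : ℕ → ℕ} (hg : Computable g) : Computable₂ (condB g) := by
  have ux : Computable fun p : ℕ × ℕ => p.2.unpair.1 :=
    (Primrec.fst.comp (Primrec.unpair.comp Primrec.snd)).to_comp
  have ut : Computable fun p : ℕ × ℕ => p.2.unpair.2.unpair.1 :=
    (Primrec.fst.comp (Primrec.unpair.comp (Primrec.snd.comp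
      (Primrec.unpair.comp Primrec.snd)))).to_comp
  have uu : Computable fun p : ℕ × ℕ => p.2.unpair.2.unpair.2 :=
    (Primrec.snd.comp (Primrec.unpair.comp (Primrec.snd.comp
      (Primrec.unpair.comp Primrec.snd)))).to_comp
  have h1 : Computable fun p : ℕ × ℕ => stg p.1 p.2.unpair.2.unpair.1 :=
    stg_primrec.to_comp.comp Computable.fst ut
  have h2 : Computable fun p : ℕ × ℕ => !stg p.1 (p.2.unpair.2.unpair.1 - 1) :=
    Primrec.not.to_comp.comp (stg_primrec.to_comp.comp Computable.fst
      ((Primrec₂.to_comp Primrec.nat_sub).comp ut (Computable.const 1)))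
  have h3 : Computable fun p : ℕ × ℕ => decide (p.2.unpair.2.unpair.1 ≤ g p.2.unpair.2.unpair.2) :=
    (Primrec₂.to_comp Primrec.nat_le.decide).comp ut (hg.comp uu)
  have h4 : Computable fun p : ℕ × ℕ => belowAll g p.2.unpair.2.unpair.1 p.2.unpair.2.unpair.2 :=
    (belowAll_computable hg).comp ut uu
  have h5 : Computable fun p : ℕ × ℕ => decide (p.2.unpair.1 < g p.2.unpair.2.unpair.2) :=
    (Primrec₂.to_comp Primrec.nat_lt.decide).comp ux (hg.comp uu)
  exact (Computable.band' (Computable.band' (Computable.band' (Computable.band' h1 h2) h3) h4)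
    h5).to₂

theorem kk_computable {g : ℕ → ℕ} (hg : Computable g) : Computable₂ (kk g) := by
  have hd2 : Computable fun p : ℕ × ℕ => p.2 / 2 :=
    (Primrec₂.to_comp Primrec.nat_div).comp Computable.snd (Computable.const 2)
  have hc : Computable fun p : ℕ × ℕ => (p.2 % 2 == 0) :=
    (Primrec.beq.comp (Primrec.nat_mod.comp Primrec.snd (Primrec.const 2))
      (Primrec.const 0)).to_comp
  have hb1 : Computable fun p : ℕ × ℕ => Nat.pair (p.2 / 2) 0 :=
    (Primrec₂.to_comp Primrec₂.natPair).comp hd2 (Computable.const 0)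
  have hb2c : Computable fun p : ℕ × ℕ => condA p.1 (p.2 / 2) || condB g p.1 (p.2 / 2) :=
    Computable.bor' (condA_computable.comp Computable.fst hd2)
      ((condB_computable hg).comp Computable.fst hd2)
  have hb2v : Computable fun p : ℕ × ℕ => Nat.pair (p.2 / 2).unpair.1 1 :=
    (Primrec₂.to_comp Primrec₂.natPair).comp
      ((Primrec.fst.comp Primrec.unpair).to_comp.comp hd2) (Computable.const 1)
  exact (Computable.cond hc hb1 (Computable.cond hb2c hb2v (Computable.const (Nat.pair 0 0)))).to₂

theorem stg_zero (c : ℕ) : stg c 0 = false := by simp [stg, evaln]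

theorem stg_mono {c : ℕ} {s t : ℕ} (h : s ≤ t) (hs : stg c s = true) : stg c t = true := by
  simp only [stg, Option.isSome_iff_exists] at hs ⊢
  obtain ⟨x, hx⟩ := hs
  exact ⟨x, evaln_mono h hx⟩

theorem belowAll_iff {g : ℕ → ℕ} {t u : ℕ} : belowAll g t u = true ↔ ∀ w < u, g w < t := by
  induction u with
  | zero => simp [belowAll]
  | succ u ih =>
    simp only [belowAll, Bool.and_eq_true, decide_eq_true_eq] at *
    constructor
    · rintro ⟨h1, h2⟩ w hw
      rcases Nat.lt_succ_iff_lt_or_eq.1 hw with h | rfl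
      · exact ih.1 h1 w h
      · exact h2
    · intro h
      exact ⟨ih.2 fun w hw => h w (hw.trans (Nat.lt_succ_self u)), h u (Nat.lt_succ_self u)⟩

/-- the "halts" predicate -/
def Hlt (c : ℕ) : Prop := ∃ s, stg c s = true

open Classical in
noncomputable def lenA (g : ℕ → ℕ) (c : ℕ) : ℕ :=
  if h : Hlt c then
    if h2 : ∃ u, Nat.find h ≤ g u then g (Nat.find h2) else 0
  else 0

def rr (g : ℕ → ℕ) (c : ℕ) : ℕ →. ℕ := fun x =>
  Part.assert (¬ Hlt c ∨ x < lenA g c) fun _ => Part.some 0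

theorem stg_false_iff {c : ℕ} (h : Hlt c) {s : ℕ} : stg c s = false ↔ s < Nat.find h := by
  constructor
  · intro hs
    by_contra hlt
    push_neg at hlt
    rw [stg_mono hlt (Nat.find_spec h)] at hs
    simp at hs
  · intro hs
    exact Bool.eq_false_iff.2 (Nat.find_min h hs)

theorem find_char {c : ℕ} (h : Hlt c) {t : ℕ} (h1 : stg c t = true)
    (h2 : stg c (t - 1) = false) : t = Nat.find h := by
  have hle : Nat.find h ≤ t := Nat.find_min' h h1
  rcases eq_or_lt_of_le hle with heq | hlt
  · exact heq.symm
  · have : stg c (t - 1) = true := stg_mono (by omega) (Nat.find_spec h)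
    simp [this] at h2

theorem findu_char {g : ℕ → ℕ} {t₀ : ℕ} (h2 : ∃ u, t₀ ≤ g u) {u : ℕ} (h3 : t₀ ≤ g u)
    (h4 : ∀ w < u, g w < t₀) : u = Nat.find h2 := by
  have hle : Nat.find h2 ≤ u := Nat.find_min' h2 h3
  rcases eq_or_lt_of_le hle with heq | hlt
  · exact heq.symm
  · exact absurd (Nat.find_spec h2) (by simpa using h4 _ hlt)

theorem lenA_eq {g : ℕ → ℕ} {c : ℕ} (h : Hlt c) (h2 : ∃ u, Nat.find h ≤ g u) :
    lenA g c = g (Nat.find h2) := by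
  rw [lenA, dif_pos h, dif_pos h2]

theorem find_le_lenA {g : ℕ → ℕ} {c : ℕ} (h : Hlt c) (h2 : ∃ u, Nat.find h ≤ g u) :
    Nat.find h ≤ lenA g c := by
  rw [lenA_eq h h2]; exact Nat.find_spec h2

theorem rr_eq_some_iff {g : ℕ → ℕ} {c x z : ℕ} :
    rr g c x = Part.some z ↔ (¬ Hlt c ∨ x < lenA g c) ∧ z = 0 := by
  rw [Part.eq_some_iff, rr, Part.mem_assert_iff]
  simp [Part.mem_some_iff, and_comm]

theorem rr_dom_iff {g : ℕ → ℕ} {c x : ℕ} :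
    (rr g c x).Dom ↔ (¬ Hlt c ∨ x < lenA g c) := by
  rw [Part.dom_iff_mem]
  constructor
  · rintro ⟨y, hy⟩
    exact (Part.mem_assert_iff.1 hy).fst
  · intro hP
    exact ⟨0, Part.mem_assert_iff.2 ⟨hP, Part.mem_some_iff.2 rfl⟩⟩

theorem condB_iff {g : ℕ → ℕ} {c m : ℕ} :
    condB g c m = true ↔
      stg c m.unpair.2.unpair.1 = true ∧ stg c (m.unpair.2.unpair.1 - 1) = false ∧
      m.unpair.2.unpair.1 ≤ g m.unpair.2.unpair.2 ∧
      (∀ w < m.unpair.2.unpair.2, g w < m.unpair.2.unpair.1) ∧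
      m.unpair.1 < g m.unpair.2.unpair.2 := by
  simp only [condB, Bool.and_eq_true, decide_eq_true_eq, Bool.not_eq_true', belowAll_iff]
  tauto

theorem kk_mem_graphE {g : ℕ → ℕ} (hgu : ∀ t, ∃ u, t ≤ g u) (c : ℕ) :
    Set.range (kk g c) = graphE (rr g c) := by
  ext y
  simp only [graphE, Set.mem_union, Set.mem_setOf_eq]
  constructor
  · rintro ⟨n, rfl⟩
    by_cases hpar : n % 2 = 0
    · left; exact ⟨n / 2, by simp [kk, hpar]⟩
    · have hm : (n % 2 == 0) = false := by simp [hpar]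
      rw [kk, hm, Bool.cond_false]
      cases hor : condA c (n / 2) || condB g c (n / 2)
      · rw [Bool.cond_false]; left; exact ⟨0, rfl⟩
      · rw [Bool.cond_true]; right
        refine ⟨(n / 2).unpair.1, 0, rr_eq_some_iff.2 ⟨?_, rfl⟩, rfl⟩
        rcases Bool.or_eq_true_iff.1 hor with hA | hB
        · -- condA case
          simp only [condA, Bool.and_eq_true, decide_eq_true_eq, Bool.not_eq_true'] at hA
          obtain ⟨hs, hxs⟩ := hA
          by_cases h : Hlt c
          · right
            have h2 := hgu (Nat.find h)
            have hlt : (n / 2).unpair.2 < Nat.find h := (stg_false_iff h).1 hs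
            have := find_le_lenA h h2
            omega
          · exact Or.inl h
        · -- condB case
          rw [condB_iff] at hB
          obtain ⟨h1, h2, h3, h4, h5⟩ := hB
          have h : Hlt c := ⟨_, h1⟩
          right
          have ht : (n / 2).unpair.2.unpair.1 = Nat.find h := find_char h h1 h2
          have h2' : ∃ u, Nat.find h ≤ g u := hgu _
          rw [ht] at h3 h4
          have hu : (n / 2).unpair.2.unpair.2 = Nat.find h2' := findu_char h2' h3 h4
          rw [lenA_eq h h2', ← hu]
          exact h5
  · rintro (⟨w, rfl⟩ | ⟨x, z, hxz, rfl⟩)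
    · refine ⟨2 * w, ?_⟩
      have h1 : 2 * w % 2 = 0 := by omega
      have h2 : 2 * w / 2 = w := by omega
      simp [kk, h1, h2]
    · obtain ⟨hP, rfl⟩ := rr_eq_some_iff.1 hxz
      rcases Classical.em (Hlt c) with h | h
      · -- halting: use condB
        have hlen : x < lenA g c := hP.resolve_left (fun h' => h' h)
        have h2 : ∃ u, Nat.find h ≤ g u := hgu _
        refine ⟨2 * Nat.pair x (Nat.pair (Nat.find h) (Nat.find h2)) + 1, ?_⟩
        set m := Nat.pair x (Nat.pair (Nat.find h) (Nat.find h2)) with hm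
        have hpar : (2 * m + 1) % 2 = 1 := by omega
        have hdiv : (2 * m + 1) / 2 = m := by omega
        have hcB : condB g c m = true := by
          rw [condB_iff]
          simp only [hm, Nat.unpair_pair]
          refine ⟨Nat.find_spec h, ?_, Nat.find_spec h2, fun w hw => ?_, ?_⟩
          · rcases Nat.eq_zero_or_pos (Nat.find h) with h0 | h0
            · exact absurd (h0 ▸ Nat.find_spec h) (by simp [stg_zero])
            · exact Bool.eq_false_iff.2 (Nat.find_min h (by omega))
          · by_contra hge
            push_neg at hge
            exact Nat.find_min h2 hw hge
          · rwa [lenA_eq h h2] at hlen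
        have hb : ((2 * m + 1) % 2 == 0) = false := by rw [hpar]; rfl
        simp only [kk, hb, Bool.cond_false, hdiv, hcB, Bool.or_true, Bool.cond_true]
        rw [hm, Nat.unpair_pair]
      · -- non-halting: use condA
        refine ⟨2 * Nat.pair x (x + 1) + 1, ?_⟩
        set m := Nat.pair x (x + 1) with hm
        have hpar : (2 * m + 1) % 2 = 1 := by omega
        have hdiv : (2 * m + 1) / 2 = m := by omega
        have hcA : condA c m = true := by
          simp only [condA, hm, Nat.unpair_pair, Bool.and_eq_true, decide_eq_true_eq,
            Bool.not_eq_true']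
          exact ⟨Bool.eq_false_iff.2 fun hs => h ⟨_, hs⟩, Nat.lt_succ_self x⟩
        have hb : ((2 * m + 1) % 2 == 0) = false := by rw [hpar]; rfl
        simp only [kk, hb, Bool.cond_false, hdiv, hcA, Bool.true_or, Bool.cond_true]
        rw [hm, Nat.unpair_pair]

section NoEffectiveLength

theorem rr_isInitSeg {A : Set ℕ} {g : ℕ → ℕ} (hA : A = Set.range g)
    (hgu : ∀ t, ∃ u, t ≤ g u) {c : ℕ} (h : Hlt c) : IsInitSeg A (rr g c) := by
  right
  refine ⟨lenA g c, ?_, ?_⟩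
  · rw [hA, lenA_eq h (hgu _)]; exact ⟨_, rfl⟩
  · ext x; simp [rr_dom_iff, h]

theorem rr_mem_SA {A : Set ℕ} {g : ℕ → ℕ} (hA : A = Set.range g)
    (hgu : ∀ t, ∃ u, t ≤ g u) (c : ℕ) : rr g c ∈ SA A := by
  by_cases h : Hlt c
  · exact Or.inr (rr_isInitSeg hA hgu h)
  · exact Or.inl ⟨fun _ => 0, Computable.const 0,
      fun x => rr_eq_some_iff.2 ⟨Or.inl h, rfl⟩⟩

/-- No effective domain-length function for initial-segment functions. -/
theorem no_effective_length (A : Set ℕ) (hAinf : A.Infinite) (hAce : CEset A)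
    (θ : ℕ → ℕ →. ℕ) (hθ : QuasiGodel A θ) :
    ¬ ∃ p : ℕ → ℕ, Computable p ∧
        ∀ i, IsInitSeg A (θ i) → {x : ℕ | (θ i x).Dom} = {m : ℕ | m < p i} := by
  rintro ⟨p, hpc, hp⟩
  -- obtain a computable enumeration of `A`
  rcases hAce with hA0 | ⟨g, hgc, hA⟩
  · rw [hA0] at hAinf; exact hAinf Set.finite_empty
  have hgu : ∀ t, ∃ u, t ≤ g u := by
    intro t
    by_contra hno
    push_neg at hno
    have hsub : A ⊆ Set.Iio t := by rw [hA]; rintro x ⟨u, rfl⟩; exact hno u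
    exact hAinf ((Set.finite_Iio t).subset hsub)
  -- apply (QGN II) to the computable enumeration `kk g`
  obtain ⟨v, hvc, hv⟩ := hθ.2.2 (kk g) (kk_computable hgc)
  have hθv : ∀ c, θ (v c) = rr g c := fun c =>
    hv c (rr g c) (rr_mem_SA hA hgu c) (kk_mem_graphE hgu c)
  -- on halting `c`, the value `p (v c)` is `lenA g c`
  have hplen : ∀ c, Hlt c → p (v c) = lenA g c := by
    intro c h
    have hinit : IsInitSeg A (θ (v c)) := by rw [hθv c]; exact rr_isInitSeg hA hgu h
    have hdom := hp (v c) hinit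
    rw [hθv c] at hdom
    have hdom2 : {x : ℕ | (rr g c x).Dom} = {m : ℕ | m < lenA g c} := by
      ext x; simp [rr_dom_iff, h]
    rw [hdom2] at hdom
    have h1 := Set.ext_iff.1 hdom (lenA g c)
    have h2 := Set.ext_iff.1 hdom (p (v c))
    simp only [Set.mem_setOf_eq] at h1 h2
    omega
  -- key equivalence: non-halting is witnessed by the enumeration `kk g`
  have hkey : ∀ c, (¬ Hlt c ↔ ∃ n, kk g c n = Nat.pair (p (v c)) 1) := by
    intro c
    constructor
    · intro h
      have hmem : Nat.pair (p (v c)) 1 ∈ Set.range (kk g c) := by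
        rw [kk_mem_graphE hgu]
        exact Or.inr ⟨p (v c), 0, rr_eq_some_iff.2 ⟨Or.inl h, rfl⟩, rfl⟩
      exact hmem
    · rintro ⟨n, hn⟩ h
      have hmem : Nat.pair (p (v c)) 1 ∈ Set.range (kk g c) := ⟨n, hn⟩
      rw [kk_mem_graphE hgu] at hmem
      rcases hmem with ⟨y, heq⟩ | ⟨x, z, hxz, heq⟩
      · exact absurd (Nat.pair_eq_pair.1 heq).2 one_ne_zero
      · obtain ⟨hx, hz⟩ := Nat.pair_eq_pair.1 heq
        obtain ⟨hP, rfl⟩ := rr_eq_some_iff.1 hxz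
        have hxlen : x < lenA g c := hP.resolve_left (fun h' => h' h)
        rw [← hx, hplen c h] at hxlen
        exact lt_irrefl _ hxlen
  -- `Hlt` is r.e.
  have hHlt_iff : ∀ c : ℕ, Hlt c ↔ (eval (Denumerable.ofNat Code c) 0).Dom := by
    intro c
    rw [Part.dom_iff_mem]
    constructor
    · rintro ⟨s, hs⟩
      rw [stg, Option.isSome_iff_exists] at hs
      obtain ⟨x, hx⟩ := hs
      exact ⟨x, evaln_sound hx⟩
    · rintro ⟨x, hx⟩
      obtain ⟨k, hk⟩ := evaln_complete.1 hx
      exact ⟨k, by rw [stg, Option.isSome_iff_exists]; exact ⟨x, hk⟩⟩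
  have hre1 : REPred Hlt :=
    (Partrec.dom_re (eval_part.comp (Computable.ofNat Code) (Computable.const 0))).of_eq
      fun c => (hHlt_iff c).symm
  -- the complement of `Hlt` is r.e.
  have hF : Computable₂ fun c n => decide (kk g c n = Nat.pair (p (v c)) 1) :=
    ((Primrec₂.to_comp (Primrec.eq (α := ℕ)).decide).comp (kk_computable hgc)
      ((Primrec₂.to_comp Primrec₂.natPair).comp (hpc.comp (hvc.comp Computable.fst))
        (Computable.const 1))).to₂
  have hrf : Partrec fun c : ℕ =>
      Nat.rfind fun n => (Part.some (decide (kk g c n = Nat.pair (p (v c)) 1)) : Part Bool) :=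
    Partrec.rfind hF.partrec₂
  have hre2 : REPred fun c => ¬ Hlt c := by
    refine (Partrec.dom_re hrf).of_eq fun c => ?_
    refine Nat.rfind_dom.trans ?_
    simp only [Part.mem_some_iff, Part.some_dom, implies_true, forall_true_iff, and_true, true_eq_decide_iff]
    exact (hkey c).symm
  have hcp : ComputablePred Hlt := ComputablePred.computable_iff_re_compl_re'.2 ⟨hre1, hre2⟩
  -- transfer to the halting problem on codes
  obtain ⟨f, hf, hfp⟩ := ComputablePred.computable_iff.1 hcp
  apply ComputablePred.halting_problem 0
  refine ComputablePred.computable_iff.2 ⟨fun code => f (Encodable.encode code),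
    hf.comp Computable.encode, funext fun code => ?_⟩
  have h1 : Hlt (Encodable.encode code) ↔ (eval code 0).Dom := by
    rw [hHlt_iff, Denumerable.ofNat_encode]
  have h2 : Hlt (Encodable.encode code) = (f (Encodable.encode code) = true) :=
    congrFun hfp _
  exact (propext h1).symm.trans h2

end NoEffectiveLength
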